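/- Algorithm ANY WALK returns, for each node v' reachable from v by a path with label in L(regex), exactly one such path; i.e., the set ReachedFinal at termination equals { v' | ∃ path from v to v' in G with label in L(regex) }, and exactly one path per element of ReachedFinal is output. -/
import Mathlib


/-- A graph database: edges with source, target, and label. -/
structure GraphDB (V E S : Type) where
  src : E → V
  tgt : E → V
  lab : E → S

/-- An NFA with transition relation `δ ⊆ Q × Σ × Q`, initial state `q0`, final states `F`. -/
structure NFAx (Q S : Type) where
  δ : Set (Q × S × Q)
  q0 : Q
  F : Set Q

/-- `A.Run q w q'`: the automaton can read word `w` going from state `q` to state `q'`. -/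
inductive NFAx.Run {Q S : Type} (A : NFAx Q S) : Q → List S → Q → Prop
  | nil (q : Q) : A.Run q [] q
  | cons {q q' q'' : Q} {a : S} {w : List S} :
      (q, a, q') ∈ A.δ → A.Run q' w q'' → A.Run q (a :: w) q''

/-- The language accepted by the NFA. -/
def NFAx.Lang {Q S : Type} (A : NFAx Q S) : Set (List S) :=
  {w | ∃ qf ∈ A.F, A.Run A.q0 w qf}

/-- `G.IsWalk v es w`: the edge list `es` forms a walk from `v` to `w` in `G`. -/
def GraphDB.IsWalk {V E S : Type} (G : GraphDB V E S) : V → List E → V → Prop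
  | v, [], w => v = w
  | v, e :: es, w => G.src e = v ∧ G.IsWalk (G.tgt e) es w

/-- Distance (minimum number of edges over all walks), `⊤` if unreachable. -/
noncomputable def GraphDB.dist {V E S : Type} (G : GraphDB V E S) (v w : V) : ℕ∞ :=
  sInf {n : ℕ∞ | ∃ es : List E, G.IsWalk v es w ∧ (es.length : ℕ∞) = n}

/-- Edges of the product graph: pairs of a `G`-edge and a compatible transition. -/
def ProdE {V E Q S : Type} (G : GraphDB V E S) (A : NFAx Q S) : Type :=
  {p : E × Q × S × Q // p.2 ∈ A.δ ∧ G.lab p.1 = p.2.2.1}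

/-- The product graph `G×` of a graph database `G` and an NFA `A`. -/
def ProdGraph {V E Q S : Type} (G : GraphDB V E S) (A : NFAx Q S) :
    GraphDB (V × Q) (ProdE G A) S where
  src p := (G.src p.1.1, p.1.2.1)
  tgt p := (G.tgt p.1.1, p.1.2.2.2)
  lab p := G.lab p.1.1

/-- Projection of a product-graph edge to the underlying `G`-edge. -/
def projE {V E Q S : Type} {G : GraphDB V E S} {A : NFAx Q S} (p : ProdE G A) : E := p.1.1

/-- `IsNWalk adj v xs w`: `xs` is the list of successive nodes of a walk from `v` to `w`. -/
def IsNWalk {V : Type} (adj : V → List V) : V → List V → V → Prop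
  | v, [], w => v = w
  | v, x :: xs, w => x ∈ adj v ∧ IsNWalk adj x xs w

/-- BFS distance: minimum number of edges over all walks, `⊤` if unreachable. -/
noncomputable def ndist {V : Type} (adj : V → List V) (s u : V) : ℕ∞ :=
  sInf {n : ℕ∞ | ∃ xs : List V, IsNWalk adj s xs u ∧ (xs.length : ℕ∞) = n}

/-- BFS main loop (fuelled): returns the dequeue order of nodes. -/
def bfsAux {V : Type} [DecidableEq V] (adj : V → List V) :
    ℕ → List V → List V → List V
  | 0, _, _ => []
  | _ + 1, [], _ => []
  | fuel + 1, u :: qs, vis =>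
      let news := ((adj u).filter (fun x => !vis.contains x)).dedup
      u :: bfsAux adj fuel (qs ++ news) (vis ++ news)

/-- The order in which BFS from `s` dequeues (expands) the nodes. -/
def bfsOrder {V : Type} [DecidableEq V] [Fintype V] (adj : V → List V) (s : V) : List V :=
  bfsAux adj (Fintype.card V + 1) [s] [s]

/-- BFS main loop recording parent pointers: `(x, u)` means `x` was discovered from `u`. -/
def bfsPar {V : Type} [DecidableEq V] (adj : V → List V) :
    ℕ → List V → List V → List (V × V) → List (V × V)
  | 0, _, _, par => par
  | _ + 1, [], _, par => par
  | fuel + 1, u :: qs, vis, par =>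
      let news := ((adj u).filter (fun x => !vis.contains x)).dedup
      bfsPar adj fuel (qs ++ news) (vis ++ news) (par ++ news.map (fun x => (x, u)))

/-- Parent pointers produced by BFS from `s`. -/
def bfsParents {V : Type} [DecidableEq V] [Fintype V] (adj : V → List V) (s : V) :
    List (V × V) :=
  bfsPar adj (Fintype.card V + 1) [s] [s] []

/-- Length of the path from `s` to `u` obtained by following parent pointers. -/
def parentDepth {V : Type} [DecidableEq V] (par : List (V × V)) (s : V) : ℕ → V → Option ℕ
  | 0, _ => none
  | fuel + 1, u =>
      if u = s then some 0
      else match par.lookup u with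
        | some w => (parentDepth par s fuel w).map (· + 1)
        | none => none


section AnyWalkAux
variable {V : Type} [DecidableEq V] (adj : V → List V)

omit [DecidableEq V] in
lemma isNWalk_snoc {s u y : V} {xs : List V} (h : IsNWalk adj s xs u)
    (hy : y ∈ adj u) : IsNWalk adj s (xs ++ [y]) y := by
  induction xs generalizing s with
  | nil =>
      have h' : s = u := h
      subst h'
      exact ⟨hy, rfl⟩
  | cons a as ih => exact ⟨h.1, ih h.2⟩

lemma mem_news {u : V} {vis : List V} {x : V} :
    x ∈ ((adj u).filter (fun x => !vis.contains x)).dedup ↔ x ∈ adj u ∧ x ∉ vis := by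
  simp [List.mem_filter, List.mem_dedup]

lemma bfs_sound (s : V) : ∀ fuel (qs vis : List V),
    (∀ u ∈ qs, ∃ xs, IsNWalk adj s xs u) →
    ∀ x ∈ bfsAux adj fuel qs vis, ∃ xs, IsNWalk adj s xs x := by
  intro fuel
  induction fuel with
  | zero => intro qs vis _ x hx; simp [bfsAux] at hx
  | succ k ih =>
    intro qs vis hqs x hx
    match qs with
    | [] => simp [bfsAux] at hx
    | u :: qs' =>
      rw [bfsAux] at hx
      rcases List.mem_cons.mp hx with h | h
      · exact h ▸ hqs u (by simp)
      · refine ih _ _ ?_ x h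
        intro w hw
        rcases List.mem_append.mp hw with hw | hw
        · exact hqs w (by simp [hw])
        · obtain ⟨hw, _⟩ := (mem_news adj).mp hw
          obtain ⟨xs, hxs⟩ := hqs u (by simp)
          exact ⟨xs ++ [w], isNWalk_snoc adj hxs hw⟩

lemma bfs_main [Fintype V] : ∀ fuel (qs vis done : List V),
    vis.Perm (done ++ qs) → vis.Nodup →
    qs.length + (Fintype.card V - vis.length) ≤ fuel →
    (∀ u ∈ done, ∀ y ∈ adj u, y ∈ vis) →
    (∀ x ∈ vis, x ∈ done ++ bfsAux adj fuel qs vis) ∧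
    (∀ u ∈ done ++ bfsAux adj fuel qs vis, ∀ y ∈ adj u, y ∈ done ++ bfsAux adj fuel qs vis) := by
  intro fuel
  induction fuel with
  | zero =>
    intro qs vis done hperm hnd hfuel hdone
    have hq : qs = [] := List.length_eq_zero_iff.mp (by omega)
    subst hq
    simp only [bfsAux, List.append_nil] at *
    constructor
    · intro x hx; exact (hperm.mem_iff).mp hx
    · intro u hu y hy; exact (hperm.mem_iff).mp (hdone u hu y hy)
  | succ k ih =>
    intro qs vis done hperm hnd hfuel hdone
    match qs with
    | [] =>
      simp only [bfsAux, List.append_nil] at *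
      constructor
      · intro x hx; exact (hperm.mem_iff).mp hx
      · intro u hu y hy; exact (hperm.mem_iff).mp (hdone u hu y hy)
    | u :: qs' =>
      rw [bfsAux]
      set news := ((adj u).filter (fun x => !vis.contains x)).dedup with hnews
      have hmemnews : ∀ x, x ∈ news ↔ x ∈ adj u ∧ x ∉ vis := fun x => mem_news adj
      have hperm' : (vis ++ news).Perm ((done ++ [u]) ++ (qs' ++ news)) := by
        refine (hperm.append_right news).trans ?_
        simp
      have hnd' : (vis ++ news).Nodup := by
        refine List.Nodup.append hnd (List.nodup_dedup _) ?_
        intro a ha hb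
        exact ((hmemnews a).mp hb).2 ha
      have hlen : vis.length + news.length ≤ Fintype.card V := by
        simpa using hnd'.length_le_card
      have hfuel2 : qs'.length + 1 + (Fintype.card V - vis.length) ≤ k + 1 := by
        simpa using hfuel
      have hfuel' : (qs' ++ news).length + (Fintype.card V - (vis ++ news).length) ≤ k := by
        simp only [List.length_append]
        omega
      have hdone' : ∀ w ∈ done ++ [u], ∀ y ∈ adj w, y ∈ vis ++ news := by
        intro w hw y hy
        rcases List.mem_append.mp hw with hw | hw
        · exact List.mem_append.mpr (Or.inl (hdone w hw y hy))
        · simp only [List.mem_singleton] at hw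
          subst hw
          by_cases hyv : y ∈ vis
          · exact List.mem_append.mpr (Or.inl hyv)
          · exact List.mem_append.mpr (Or.inr ((hmemnews y).mpr ⟨hy, hyv⟩))
      obtain ⟨h1, h2⟩ := ih (qs' ++ news) (vis ++ news) (done ++ [u]) hperm' hnd' hfuel' hdone'
      have heq : done ++ u :: bfsAux adj k (qs' ++ news) (vis ++ news)
          = (done ++ [u]) ++ bfsAux adj k (qs' ++ news) (vis ++ news) := by simp
      rw [heq]
      constructor
      · intro x hx; exact h1 x (List.mem_append.mpr (Or.inl hx))
      · exact h2

lemma bfsOrder_mem [Fintype V] (s x : V) :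
    x ∈ bfsOrder adj s ↔ ∃ xs, IsNWalk adj s xs x := by
  constructor
  · intro hx
    refine bfs_sound adj s _ [s] [s] ?_ x hx
    intro u hu
    simp only [List.mem_singleton] at hu
    exact ⟨[], hu.symm⟩
  · rintro ⟨xs, hxs⟩
    have hcard : 1 ≤ Fintype.card V := Fintype.card_pos_iff.mpr ⟨s⟩
    obtain ⟨h1, h2⟩ := bfs_main adj (Fintype.card V + 1) [s] [s] []
      (by simp) (by simp)
      (by simp; omega)
      (by simp)
    simp only [List.nil_append] at h1 h2
    have hs : s ∈ bfsOrder adj s := h1 s (by simp)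
    have key : ∀ (ys : List V) (u y : V), u ∈ bfsOrder adj s → IsNWalk adj u ys y →
        y ∈ bfsOrder adj s := by
      intro ys
      induction ys with
      | nil =>
        intro u y hu hw
        have : u = y := hw
        exact this ▸ hu
      | cons a as ih =>
        intro u y hu hw
        exact ih a y (h2 u hu a hw.1) hw.2
    exact key xs s x hs hxs

end AnyWalkAux

section ProdAux
variable {V E Q S : Type} (G : GraphDB V E S) (A : NFAx Q S)
  (adj : V × Q → List (V × Q))
  (hadj : ∀ x y : V × Q, y ∈ adj x ↔
      ∃ e : ProdE G A, (ProdGraph G A).src e = x ∧ (ProdGraph G A).tgt e = y)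

include hadj in
lemma prod_to_graph : ∀ (xs : List (V × Q)) (p p' : V × Q),
    IsNWalk adj p xs p' →
    ∃ es : List E, G.IsWalk p.1 es p'.1 ∧ A.Run p.2 (es.map G.lab) p'.2 := by
  intro xs
  induction xs with
  | nil =>
    intro p p' h
    have : p = p' := h
    subst this
    exact ⟨[], rfl, NFAx.Run.nil _⟩
  | cons a as ih =>
    intro p p' h
    obtain ⟨e, hsrc, htgt⟩ := (hadj p a).mp h.1
    obtain ⟨es, hwalk, hrun⟩ := ih a p' h.2
    have hs1 : G.src e.1.1 = p.1 := congrArg Prod.fst hsrc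
    have hs2 : e.1.2.1 = p.2 := congrArg Prod.snd hsrc
    have ht1 : G.tgt e.1.1 = a.1 := congrArg Prod.fst htgt
    have ht2 : e.1.2.2.2 = a.2 := congrArg Prod.snd htgt
    refine ⟨e.1.1 :: es, ⟨hs1, by rw [ht1]; exact hwalk⟩, ?_⟩
    refine NFAx.Run.cons (q' := e.1.2.2.2) ?_ ?_
    · have hmem := e.2.1
      rw [e.2.2, ← hs2]
      simpa using hmem
    · rw [ht2]
      exact hrun

include hadj in
lemma graph_to_prod : ∀ (es : List E) (v v' : V) (q q' : Q),
    G.IsWalk v es v' → A.Run q (es.map G.lab) q' →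
    ∃ xs, IsNWalk adj (v, q) xs (v', q') := by
  intro es
  induction es with
  | nil =>
    intro v v' q q' hw hr
    have hv : v = v' := hw
    have hq : q = q' := by cases hr; rfl
    subst hv; subst hq
    exact ⟨[], rfl⟩
  | cons e es ih =>
    intro v v' q q' hw hr
    obtain ⟨hsrc, hw'⟩ := hw
    cases hr with
    | cons hδ hr' =>
      rename_i qm
      obtain ⟨xs, hxs⟩ := ih (G.tgt e) v' qm q' hw' hr'
      refine ⟨(G.tgt e, qm) :: xs, ?_, hxs⟩
      refine (hadj (v, q) (G.tgt e, qm)).mpr ⟨⟨(e, q, G.lab e, qm), hδ, rfl⟩, ?_, rfl⟩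
      simp [ProdGraph, hsrc]

end ProdAux

/-- the ANY WALK algorithm (graph search on the product graph from `(v,q₀)`,
recording `v'` in `ReachedFinal` the first time some `(v',q')` with `q' ∈ F` is reached)
computes `ReachedFinal = { v' | ∃ path from v to v' with label in L(regex) }`, and outputs
exactly one such path per element of `ReachedFinal`. -/
theorem anyWalk_correct {V E Q S : Type} [DecidableEq V] [DecidableEq Q]
    [Fintype V] [Fintype Q] (G : GraphDB V E S) (A : NFAx Q S) (v : V)
    (adj : V × Q → List (V × Q))
    (hadj : ∀ x y : V × Q, y ∈ adj x ↔
      ∃ e : ProdE G A, (ProdGraph G A).src e = x ∧ (ProdGraph G A).tgt e = y) :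
    {v' : V | ∃ q' ∈ A.F, (v', q') ∈ bfsOrder adj (v, A.q0)} =
      {v' : V | ∃ es : List E, G.IsWalk v es v' ∧ es.map G.lab ∈ A.Lang} ∧
    ∃ sol : V → List E, ∀ v' ∈ {v' : V | ∃ q' ∈ A.F, (v', q') ∈ bfsOrder adj (v, A.q0)},
      G.IsWalk v (sol v') v' ∧ (sol v').map G.lab ∈ A.Lang := by
  classical
  have hmem : ∀ v' : V, (∃ q' ∈ A.F, (v', q') ∈ bfsOrder adj (v, A.q0)) ↔
      (∃ es : List E, G.IsWalk v es v' ∧ es.map G.lab ∈ A.Lang) := by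
    intro v'
    constructor
    · rintro ⟨q', hqF, hq⟩
      obtain ⟨xs, hxs⟩ := (bfsOrder_mem adj (v, A.q0) (v', q')).mp hq
      obtain ⟨es, hwalk, hrun⟩ := prod_to_graph G A adj hadj xs (v, A.q0) (v', q') hxs
      exact ⟨es, hwalk, q', hqF, hrun⟩
    · rintro ⟨es, hwalk, q', hqF, hrun⟩
      obtain ⟨xs, hxs⟩ := graph_to_prod G A adj hadj es v v' A.q0 q' hwalk hrun
      exact ⟨q', hqF, (bfsOrder_mem adj (v, A.q0) (v', q')).mpr ⟨xs, hxs⟩⟩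
  constructor
  · ext v'
    simpa using hmem v'
  · refine ⟨fun v' => if h : ∃ es : List E, G.IsWalk v es v' ∧ es.map G.lab ∈ A.Lang
      then h.choose else [], ?_⟩
    intro v' hv'
    have h := (hmem v').mp hv'
    simp only [dif_pos h]
    exact h.choose_spec
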